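/- Let y be obtained from a binary string x by deleting one symbol equal to 0 and one symbol equal to 1. If N_{1111}(x) − N_{1111}(y) ≡ 1 (mod 7) and N_{0000}(x) ≡ N_{0000}(y) (mod 7), then the string 0000 is preserved from x to y. -/

import Mathlib

/-- Delete from `x` the symbols at the positions in `S`. -/
def deleteIdxs (x : List Bool) (S : Finset ℕ) : List Bool :=
  ((List.range x.length).filter (fun i => decide (i ∉ S))).map (fun i => x.getD i false)

/-- `w` occurs in `x` at position `i`. -/
def occursAt (w x : List Bool) (i : ℕ) : Prop := w <+: x.drop i

/-- The number of (possibly overlapping) occurrences of `w` in `x`. -/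
def Nw (w x : List Bool) : ℕ :=
  ((Finset.range x.length).filter (fun i => w <+: x.drop i)).card

/-- The position in the shortened string of the junction produced by deleting position `k`. -/
def junction (S : Finset ℕ) (k : ℕ) : ℕ :=
  ((Finset.range k).filter (fun m => m ∉ S)).card

/-- `w` is preserved from `x` to `y`: some set `S` of deleted positions realizing `y`
destroys no occurrence of `w` in `x` and no occurrence of `w` in `y` spans a junction. -/
def Preserved (w x y : List Bool) : Prop :=
  ∃ S : Finset ℕ,
    (∀ k ∈ S, k < x.length) ∧
    S.card + y.length = x.length ∧
    deleteIdxs x S = y ∧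
    (∀ i, occursAt w x i → ∀ k ∈ S, ¬ (i ≤ k ∧ k < i + w.length)) ∧
    (∀ j, occursAt w y j → ∀ k ∈ S, ¬ (j < junction S k ∧ junction S k < j + w.length))

/-- `x` has a (maximal) run of length `ℓ` starting at position `i`. -/
def runAt (x : List Bool) (i ℓ : ℕ) : Prop :=
  0 < ℓ ∧ i + ℓ ≤ x.length ∧
  (∀ j, i ≤ j → j < i + ℓ → x.getD j false = x.getD i false) ∧
  (i = 0 ∨ x.getD (i - 1) false ≠ x.getD i false) ∧
  (i + ℓ = x.length ∨ x.getD (i + ℓ) false ≠ x.getD i false)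

/-- position `k` of `x` lies in a run of length `ℓ`. -/
def inRun (x : List Bool) (k ℓ : ℕ) : Prop := ∃ i, runAt x i ℓ ∧ i ≤ k ∧ k < i + ℓ

def w0000 : List Bool := [false, false, false, false]
def w1111 : List Bool := [true, true, true, true]
def w11011 : List Bool := [true, true, false, true, true]
def w110011 : List Bool := [true, true, false, false, true, true]

/-- The set of strings obtainable from `x` by deleting two symbols. -/
def D2 (x : List Bool) : Set (List Bool) :=
  { y | ∃ i j : ℕ, i < j ∧ j < x.length ∧ y = deleteIdxs x ({i, j} : Finset ℕ) }

/-- run-length representation of the runs of ones, in order. -/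
def tau1 (x : List Bool) : List ℕ :=
  ((x.splitBy (· == ·)).filter (fun r => r.headD false)).map List.length

/-- the subsequence of `tau1` of entries at least 2. -/
def tauGe2 (x : List Bool) : List ℕ := (tau1 x).filter (fun ℓ => decide (2 ≤ ℓ))

/-- sum of the odd-indexed entries. -/
def oddIdxSum (l : List ℕ) : ℕ :=
  ((Finset.range l.length).filter (fun i => i % 2 = 1)).sum (fun i => l.getD i 0)


namespace ZO

/-! ### occurrence characterisation -/

def Occ (x : List Bool) (v : Bool) (i : ℕ) : Prop :=
  i + 4 ≤ x.length ∧ x.getD i false = v ∧ x.getD (i+1) false = v ∧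
    x.getD (i+2) false = v ∧ x.getD (i+3) false = v

instance (x v i) : Decidable (Occ x v i) := inferInstanceAs (Decidable (_ ∧ _))

lemma prefix4_iff (v : Bool) (l : List Bool) :
    [v,v,v,v] <+: l ↔ 4 ≤ l.length ∧ (l.getD 0 false = v ∧ l.getD 1 false = v ∧
      l.getD 2 false = v ∧ l.getD 3 false = v) := by
  match l with
  | [] => simp [List.IsPrefix]
  | [a] => constructor
           · intro h; have := h.length_le; simp at this
           · intro h; simp at h
  | [a,b] => constructor
             · intro h; have := h.length_le; simp at this
             · intro h; simp at h
  | [a,b,c] => constructor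
               · intro h; have := h.length_le; simp at this
               · intro h; simp at h
  | a::b::c::d::r => by_cases h : a = v ∧ b = v ∧ c = v ∧ d = v
                     · simp [List.cons_prefix_cons, h.1, h.2.1, h.2.2.1, h.2.2.2, eq_comm]
                     · simp only [List.cons_prefix_cons]
                       constructor
                       · rintro ⟨h1,h2,h3,h4,-⟩; exact absurd ⟨h1.symm,h2.symm,h3.symm,h4.symm⟩ h
                       · rintro ⟨-,h1,h2,h3,h4⟩
                         simp only [List.getD] at h1 h2 h3 h4
                         exact absurd ⟨by simpa using h1, by simpa using h2, by simpa using h3,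
                           by simpa using h4⟩ h

lemma getD_drop (x : List Bool) (i t : ℕ) :
    (x.drop i).getD t false = x.getD (i + t) false := by
  rw [List.getD_eq_getElem?_getD, List.getD_eq_getElem?_getD, List.getElem?_drop]

lemma occursAt_iff (v : Bool) (x : List Bool) (i : ℕ) :
    occursAt [v,v,v,v] x i ↔ Occ x v i := by
  unfold occursAt Occ
  rw [prefix4_iff, List.length_drop, getD_drop, getD_drop, getD_drop, getD_drop]
  constructor
  · rintro ⟨h1, h2⟩; exact ⟨by omega, by simpa using h2⟩
  · rintro ⟨h1, h2⟩; exact ⟨by omega, by simpa using h2⟩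

lemma occ_mem {x : List Bool} {v : Bool} {i k : ℕ} (h : Occ x v i)
    (h1 : i ≤ k) (h2 : k < i + 4) : x.getD k false = v := by
  obtain ⟨-, a0, a1, a2, a3⟩ := h
  have : k = i ∨ k = i + 1 ∨ k = i + 2 ∨ k = i + 3 := by omega
  rcases this with rfl | rfl | rfl | rfl <;> assumption

/-! ### description of a two-point deletion -/

def dmap (a b j : ℕ) : ℕ := if j < a then j else if j < b - 1 then j + 1 else j + 2
def hmap (a b i : ℕ) : ℕ := if b < i then i - 2 else if a < i then i - 1 else i

lemma range'_merge (s m k : ℕ) :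
    List.range' s m ++ List.range' (s + m) k = List.range' s (m + k) := by
  have := List.range'_append (s := s) (m := m) (n := k) (step := 1)
  simpa [Nat.add_comm] using this

lemma filt_range (n a b : ℕ) (hab : a < b) (hb : b < n) :
    (List.range n).filter (fun i => decide (i ∉ ({a,b} : Finset ℕ)))
      = List.range' 0 a ++ List.range' (a+1) (b-a-1) ++ List.range' (b+1) (n-b-1) := by
  have hsplit : List.range n
      = ((((List.range' 0 a ++ List.range' a 1) ++ List.range' (a+1) (b-a-1)) ++ List.range' b 1)
          ++ List.range' (b+1) (n-b-1)) := by
    rw [List.range_eq_range']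
    have e1 := range'_merge 0 a 1
    have e2 := range'_merge 0 (a+1) (b-a-1)
    have e3 := range'_merge 0 b 1
    have e4 := range'_merge 0 (b+1) (n-b-1)
    simp only [Nat.zero_add] at e1 e2 e3 e4
    rw [e1]
    rw [show a + 1 + (b-a-1) = b by omega] at e2
    rw [e2, e3, e4]
    congr 1; omega
  rw [hsplit]
  simp only [List.filter_append]
  have hmem : ∀ (s k : ℕ), (∀ m, s ≤ m → m < s + k → (m ≠ a ∧ m ≠ b)) →
      (List.range' s k).filter (fun i => decide (i ∉ ({a,b} : Finset ℕ))) = List.range' s k := by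
    intro s k h
    apply List.filter_eq_self.mpr
    intro m hm
    rw [List.mem_range'_1] at hm
    have := h m hm.1 hm.2
    simp [Finset.mem_insert, this.1, this.2]
  rw [hmem 0 a (by omega), hmem (a+1) (b-a-1) (by omega), hmem (b+1) (n-b-1) (by omega)]
  have ha : (List.range' a 1).filter (fun i => decide (i ∉ ({a,b} : Finset ℕ))) = [] := by
    simp [List.range']
  have hbb : (List.range' b 1).filter (fun i => decide (i ∉ ({a,b} : Finset ℕ))) = [] := by
    simp [List.range']
  rw [ha, hbb]
  simp

lemma length_del2 (x : List Bool) (a b : ℕ) (hab : a < b) (hb : b < x.length) :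
    (deleteIdxs x {a,b}).length = x.length - 2 := by
  unfold deleteIdxs
  rw [filt_range x.length a b hab hb]
  simp; omega

lemma getD_del2 (x : List Bool) (a b : ℕ) (hab : a < b) (hb : b < x.length)
    (j : ℕ) (hj : j < x.length - 2) :
    (deleteIdxs x {a,b}).getD j false = x.getD (dmap a b j) false := by
  unfold deleteIdxs
  rw [filt_range x.length a b hab hb]
  rw [List.getD_eq_getElem _ _ (by simp; omega)]
  rw [List.getElem_map]
  congr 1
  by_cases h1 : j < a
  · rw [List.getElem_append]
    rw [dif_pos (by simp; omega)]
    rw [List.getElem_append]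
    rw [dif_pos (by simp; omega)]
    rw [List.getElem_range']
    simp [dmap, h1]
  · by_cases h2 : j < b - 1
    · rw [List.getElem_append]
      rw [dif_pos (by simp; omega)]
      rw [List.getElem_append]
      rw [dif_neg (by simp; omega)]
      rw [List.getElem_range']
      simp [dmap, h1, h2]; omega
    · rw [List.getElem_append]
      rw [dif_neg (by simp; omega)]
      rw [List.getElem_range']
      simp [dmap, h1, h2]; omega

lemma getD_del2' (x : List Bool) (a b : ℕ) (hab : a < b) (hb : b < x.length)
    (j m : ℕ) (hj : j < x.length - 2)
    (hm : (j < a ∧ m = j) ∨ (a ≤ j ∧ j < b - 1 ∧ m = j + 1) ∨ (b - 1 ≤ j ∧ m = j + 2)) :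
    (deleteIdxs x {a,b}).getD j false = x.getD m false := by
  rw [getD_del2 x a b hab hb j hj]
  congr 1
  unfold dmap
  split_ifs <;> omega

/-! ### the counting identity -/

def TouchSet (x : List Bool) (v : Bool) (a b : ℕ) : Finset ℕ :=
  (Finset.range x.length).filter
    (fun i => Occ x v i ∧ ((i ≤ a ∧ a < i + 4) ∨ (i ≤ b ∧ b < i + 4)))

def SpanSet (x : List Bool) (v : Bool) (a b : ℕ) : Finset ℕ :=
  (Finset.range (x.length - 2)).filter
    (fun j => Occ (deleteIdxs x {a,b}) v j ∧ ((j < a ∧ a < j + 4) ∨ (j < b - 1 ∧ b - 1 < j + 4)))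

lemma Nw_eq (v : Bool) (x : List Bool) :
    Nw [v,v,v,v] x = ((Finset.range x.length).filter (fun i => Occ x v i)).card := by
  unfold Nw
  congr 1
  apply Finset.filter_congr
  intro i _
  exact occursAt_iff v x i

lemma count_key (v : Bool) (x : List Bool) (a b : ℕ) (hab : a < b) (hb : b < x.length) :
    Nw [v,v,v,v] x + (SpanSet x v a b).card
      = Nw [v,v,v,v] (deleteIdxs x {a,b}) + (TouchSet x v a b).card := by
  set y := deleteIdxs x {a,b} with hy
  set n := x.length with hn
  have hyl : y.length = n - 2 := length_del2 x a b hab hb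
  rw [Nw_eq, Nw_eq, hyl, ← hn]
  have hx := Finset.card_filter_add_card_filter_not
    (s := (Finset.range n).filter (fun i => Occ x v i))
    (p := fun i => (i ≤ a ∧ a < i + 4) ∨ (i ≤ b ∧ b < i + 4))
  have hysplit := Finset.card_filter_add_card_filter_not
    (s := (Finset.range (n-2)).filter (fun j => Occ y v j))
    (p := fun j => (j < a ∧ a < j + 4) ∨ (j < b - 1 ∧ b - 1 < j + 4))
  simp only [Finset.filter_filter] at hx hysplit
  have hTx : ((Finset.range n).filter
      (fun i => Occ x v i ∧ ((i ≤ a ∧ a < i + 4) ∨ (i ≤ b ∧ b < i + 4)))).card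
      = (TouchSet x v a b).card := rfl
  have hTy : ((Finset.range (n-2)).filter
      (fun j => Occ y v j ∧ ((j < a ∧ a < j + 4) ∨ (j < b - 1 ∧ b - 1 < j + 4)))).card
      = (SpanSet x v a b).card := rfl
  have hbij :
      ((Finset.range n).filter
        (fun i => Occ x v i ∧ ¬((i ≤ a ∧ a < i + 4) ∨ (i ≤ b ∧ b < i + 4)))).card
      = ((Finset.range (n-2)).filter
        (fun j => Occ y v j ∧ ¬((j < a ∧ a < j + 4) ∨ (j < b - 1 ∧ b - 1 < j + 4)))).card := by
    apply Finset.card_nbij' (hmap a b) (dmap a b)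
    · intro i hi
      simp only [Finset.mem_coe, Finset.mem_filter, Finset.mem_range] at hi ⊢
      obtain ⟨hin, ⟨hlen, h0, h1, h2, h3⟩, hnt⟩ := hi
      have hc : i + 4 ≤ a ∨ (a < i ∧ i + 4 ≤ b) ∨ b < i := by
        push_neg at hnt; omega
      rcases hc with hc | hc | hc
      · have hh : hmap a b i = i := by unfold hmap; split_ifs <;> omega
        rw [hh]
        refine ⟨by omega, ⟨by omega, ?_, ?_, ?_, ?_⟩, by omega⟩
        · rw [getD_del2' x a b hab hb i i (by omega) (by omega)]; exact h0
        · rw [getD_del2' x a b hab hb (i+1) (i+1) (by omega) (by omega)]; exact h1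
        · rw [getD_del2' x a b hab hb (i+2) (i+2) (by omega) (by omega)]; exact h2
        · rw [getD_del2' x a b hab hb (i+3) (i+3) (by omega) (by omega)]; exact h3
      · have hh : hmap a b i = i - 1 := by unfold hmap; split_ifs <;> omega
        rw [hh]
        refine ⟨by omega, ⟨by omega, ?_, ?_, ?_, ?_⟩, by omega⟩
        · rw [getD_del2' x a b hab hb (i-1) i (by omega) (by omega)]; exact h0
        · rw [getD_del2' x a b hab hb (i-1+1) (i+1) (by omega) (by omega)]; exact h1
        · rw [getD_del2' x a b hab hb (i-1+2) (i+2) (by omega) (by omega)]; exact h2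
        · rw [getD_del2' x a b hab hb (i-1+3) (i+3) (by omega) (by omega)]; exact h3
      · have hh : hmap a b i = i - 2 := by unfold hmap; split_ifs <;> omega
        rw [hh]
        refine ⟨by omega, ⟨by omega, ?_, ?_, ?_, ?_⟩, by omega⟩
        · rw [getD_del2' x a b hab hb (i-2) i (by omega) (by omega)]; exact h0
        · rw [getD_del2' x a b hab hb (i-2+1) (i+1) (by omega) (by omega)]; exact h1
        · rw [getD_del2' x a b hab hb (i-2+2) (i+2) (by omega) (by omega)]; exact h2
        · rw [getD_del2' x a b hab hb (i-2+3) (i+3) (by omega) (by omega)]; exact h3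
    · intro j hj
      simp only [Finset.mem_coe, Finset.mem_filter, Finset.mem_range] at hj ⊢
      obtain ⟨hjn, ⟨hlen, h0, h1, h2, h3⟩, hns⟩ := hj
      rw [hyl] at hlen
      have hc : j + 4 ≤ a ∨ (a ≤ j ∧ j + 4 ≤ b - 1) ∨ b - 1 ≤ j := by
        push_neg at hns; omega
      rcases hc with hc | hc | hc
      · have hh : dmap a b j = j := by unfold dmap; split_ifs <;> omega
        rw [hh]
        rw [getD_del2' x a b hab hb j j (by omega) (by omega)] at h0
        rw [getD_del2' x a b hab hb (j+1) (j+1) (by omega) (by omega)] at h1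
        rw [getD_del2' x a b hab hb (j+2) (j+2) (by omega) (by omega)] at h2
        rw [getD_del2' x a b hab hb (j+3) (j+3) (by omega) (by omega)] at h3
        exact ⟨by omega, ⟨by omega, h0, h1, h2, h3⟩, by omega⟩
      · have hh : dmap a b j = j + 1 := by unfold dmap; split_ifs <;> omega
        rw [hh]
        rw [getD_del2' x a b hab hb j (j+1) (by omega) (by omega)] at h0
        rw [getD_del2' x a b hab hb (j+1) (j+2) (by omega) (by omega)] at h1
        rw [getD_del2' x a b hab hb (j+2) (j+3) (by omega) (by omega)] at h2
        rw [getD_del2' x a b hab hb (j+3) (j+4) (by omega) (by omega)] at h3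
        refine ⟨by omega, ⟨by omega, h0, ?_, ?_, ?_⟩, by omega⟩
        · rw [show j+1+1 = j+2 by omega]; exact h1
        · rw [show j+1+2 = j+3 by omega]; exact h2
        · rw [show j+1+3 = j+4 by omega]; exact h3
      · have hh : dmap a b j = j + 2 := by unfold dmap; split_ifs <;> omega
        rw [hh]
        rw [getD_del2' x a b hab hb j (j+2) (by omega) (by omega)] at h0
        rw [getD_del2' x a b hab hb (j+1) (j+3) (by omega) (by omega)] at h1
        rw [getD_del2' x a b hab hb (j+2) (j+4) (by omega) (by omega)] at h2
        rw [getD_del2' x a b hab hb (j+3) (j+5) (by omega) (by omega)] at h3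
        refine ⟨by omega, ⟨by omega, h0, ?_, ?_, ?_⟩, by omega⟩
        · rw [show j+2+1 = j+3 by omega]; exact h1
        · rw [show j+2+2 = j+4 by omega]; exact h2
        · rw [show j+2+3 = j+5 by omega]; exact h3
    · intro i hi
      simp only [Finset.mem_coe, Finset.mem_filter, Finset.mem_range] at hi
      obtain ⟨hin, ⟨hlen, -⟩, hnt⟩ := hi
      push_neg at hnt
      unfold hmap dmap; split_ifs <;> omega
    · intro j hj
      simp only [Finset.mem_coe, Finset.mem_filter, Finset.mem_range] at hj
      obtain ⟨hjn, ⟨hlen, -⟩, hns⟩ := hj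
      push_neg at hns
      unfold hmap dmap; split_ifs <;> omega
  rw [hTx] at hx
  rw [hTy] at hysplit
  rw [hbij] at hx
  omega

/-! ### small cardinality bounds -/

lemma card_le4 (p q r s : ℕ) : ({p, q, r, s} : Finset ℕ).card ≤ 4 := by
  have h1 := Finset.card_insert_le p ({q, r, s} : Finset ℕ)
  have h2 := Finset.card_insert_le q ({r, s} : Finset ℕ)
  have h3 := Finset.card_insert_le r ({s} : Finset ℕ)
  simp only [Finset.card_singleton] at h3
  omega

lemma card_le3 (q r s : ℕ) : ({q, r, s} : Finset ℕ).card ≤ 3 := by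
  have h2 := Finset.card_insert_le q ({r, s} : Finset ℕ)
  have h3 := Finset.card_insert_le r ({s} : Finset ℕ)
  simp only [Finset.card_singleton] at h3
  omega

lemma main (x : List Bool) (a b : ℕ) (hab : a < b) (hb : b < x.length)
    (k₀ k₁ : ℕ) (hk : (k₀ = a ∧ k₁ = b) ∨ (k₀ = b ∧ k₁ = a))
    (hv0 : x.getD k₀ false = false) (hv1 : x.getD k₁ false = true)
    (hm1 : Nw [true,true,true,true] x
      ≡ Nw [true,true,true,true] (deleteIdxs x {a,b}) + 1 [MOD 7])
    (hm0 : Nw [false,false,false,false] x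
      ≡ Nw [false,false,false,false] (deleteIdxs x {a,b}) [MOD 7]) :
    TouchSet x false a b = ∅ ∧ SpanSet x false a b = ∅ := by
  have hyl : (deleteIdxs x ({a,b} : Finset ℕ)).length = x.length - 2 := length_del2 x a b hab hb
  have key0 := count_key false x a b hab hb
  have key1 := count_key true x a b hab hb
  obtain ⟨u0, u1, hperm⟩ : ∃ u0 u1 : ℕ,
      ((k₀ = a ∧ k₁ = b ∧ u0 = a ∧ u1 = b - 1) ∨ (k₀ = b ∧ k₁ = a ∧ u0 = b - 1 ∧ u1 = a)) := by
    rcases hk with ⟨h1, h2⟩ | ⟨h1, h2⟩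
    exacts [⟨a, b - 1, Or.inl ⟨h1, h2, rfl, rfl⟩⟩, ⟨b - 1, a, Or.inr ⟨h1, h2, rfl, rfl⟩⟩]
  -- bounds
  have hTx0b : (TouchSet x false a b).card ≤ 4 := by
    refine le_trans (Finset.card_le_card ?_) (card_le4 (k₀-3) (k₀-2) (k₀-1) k₀)
    intro i hi
    simp only [TouchSet, Finset.mem_filter, Finset.mem_range] at hi
    obtain ⟨hin, hocc, ht⟩ := hi
    have hne1 : ¬(i ≤ k₁ ∧ k₁ < i + 4) := by
      rintro ⟨p1, p2⟩
      have := occ_mem hocc p1 p2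
      rw [hv1] at this; exact absurd this (by simp)
    simp only [Finset.mem_insert, Finset.mem_singleton]
    rcases hperm with ⟨e1, e2, e3, e4⟩ | ⟨e1, e2, e3, e4⟩ <;> omega
  have hTx1b : (TouchSet x true a b).card ≤ 4 := by
    refine le_trans (Finset.card_le_card ?_) (card_le4 (k₁-3) (k₁-2) (k₁-1) k₁)
    intro i hi
    simp only [TouchSet, Finset.mem_filter, Finset.mem_range] at hi
    obtain ⟨hin, hocc, ht⟩ := hi
    have hne1 : ¬(i ≤ k₀ ∧ k₀ < i + 4) := by
      rintro ⟨p1, p2⟩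
      have := occ_mem hocc p1 p2
      rw [hv0] at this; exact absurd this (by simp)
    simp only [Finset.mem_insert, Finset.mem_singleton]
    rcases hperm with ⟨e1, e2, e3, e4⟩ | ⟨e1, e2, e3, e4⟩ <;> omega
  have hSyb : ∀ v, (SpanSet x v a b).card ≤ 6 := by
    intro v
    refine le_trans (Finset.card_le_card (t := ({a-3,a-2,a-1} : Finset ℕ) ∪ {b-4,b-3,b-2}) ?_) ?_
    · intro j hj
      simp only [SpanSet, Finset.mem_filter, Finset.mem_range] at hj
      obtain ⟨hjr, hocc, hsp⟩ := hj
      simp only [Finset.mem_union, Finset.mem_insert, Finset.mem_singleton]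
      omega
    · refine le_trans (Finset.card_union_le _ _) ?_
      have := card_le3 (a-3) (a-2) (a-1)
      have := card_le3 (b-4) (b-3) (b-2)
      omega
  have e0 : (TouchSet x false a b).card = (SpanSet x false a b).card := by
    have h0 : Nw [false,false,false,false] x % 7
        = (Nw [false,false,false,false] (deleteIdxs x ({a,b} : Finset ℕ))) % 7 := hm0
    have := hSyb false
    omega
  have e1 : (TouchSet x true a b).card = (SpanSet x true a b).card + 1 ∨
      ((TouchSet x true a b).card = 0 ∧ (SpanSet x true a b).card = 6) := by
    have h1 : Nw [true,true,true,true] x % 7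
        = (Nw [true,true,true,true] (deleteIdxs x ({a,b} : Finset ℕ)) + 1) % 7 := hm1
    have := hSyb true
    omega
  -- Step 1 : no 0000-occurrence of y spans u1
  have H1 : ∀ j', Occ (deleteIdxs x ({a,b} : Finset ℕ)) false j' → ¬(j' < u1 ∧ u1 < j' + 4) := by
    intro j' hocc hsp
    have hj4 : j' + 4 ≤ x.length - 2 := by have := hocc.1; omega
    have hyL : (deleteIdxs x ({a,b} : Finset ℕ)).getD (u1 - 1) false = false := occ_mem hocc (by omega) (by omega)
    have hyR : (deleteIdxs x ({a,b} : Finset ℕ)).getD u1 false = false := occ_mem hocc (by omega) (by omega)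
    have hxnb : x.getD (k₁ - 1) false = false ∧ x.getD (k₁ + 1) false = false := by
      rcases hperm with ⟨e1', e2', e3', e4'⟩ | ⟨e1', e2', e3', e4'⟩
      · -- k₀ = a, k₁ = b, u1 = b-1
        constructor
        · by_cases hba : a + 1 = b
          · rw [show k₁ - 1 = k₀ by omega]; exact hv0
          · rw [getD_del2' x a b hab hb (u1-1) (b-1) (by omega) (by omega)] at hyL
            rw [show k₁ - 1 = b - 1 by omega]; exact hyL
        · rw [getD_del2' x a b hab hb u1 (b+1) (by omega) (by omega)] at hyR
          rw [show k₁ + 1 = b + 1 by omega]; exact hyR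
      · -- k₀ = b, k₁ = a, u1 = a
        constructor
        · rw [getD_del2' x a b hab hb (u1-1) (a-1) (by omega) (by omega)] at hyL
          rw [show k₁ - 1 = a - 1 by omega]; exact hyL
        · by_cases hba : a + 1 = b
          · rw [show k₁ + 1 = k₀ by omega]; exact hv0
          · rw [getD_del2' x a b hab hb u1 (a+1) (by omega) (by omega)] at hyR
            rw [show k₁ + 1 = a + 1 by omega]; exact hyR
    -- hence no 1111-occurrence of x touches a or b
    have hTx1e : (TouchSet x true a b).card = 0 := by
      rw [Finset.card_eq_zero, Finset.eq_empty_iff_forall_notMem]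
      intro i hi
      simp only [TouchSet, Finset.mem_filter, Finset.mem_range] at hi
      obtain ⟨hin, hocc', ht⟩ := hi
      have htk : (i ≤ k₀ ∧ k₀ < i + 4) ∨ (i ≤ k₁ ∧ k₁ < i + 4) := by
        rcases hperm with ⟨e1', e2', e3', e4'⟩ | ⟨e1', e2', e3', e4'⟩ <;> omega
      rcases htk with ⟨p1, p2⟩ | ⟨p1, p2⟩
      · have := occ_mem hocc' p1 p2
        rw [hv0] at this; exact absurd this (by simp)
      · rcases eq_or_lt_of_le p1 with rfl | hlt
        · have := hocc'.2.2.1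
          rw [hxnb.2] at this; exact absurd this (by simp)
        · have := occ_mem hocc' (k := k₁ - 1) (by omega) (by omega)
          rw [hxnb.1] at this; exact absurd this (by simp)
    -- and at most 3 1111-occurrences of y span a junction
    have hSy1b : (SpanSet x true a b).card ≤ 3 := by
      refine le_trans (Finset.card_le_card (t := ({u0-3,u0-2,u0-1} : Finset ℕ)) ?_) (card_le3 _ _ _)
      intro j'' hj''
      simp only [SpanSet, Finset.mem_filter, Finset.mem_range] at hj''
      obtain ⟨hr'', hocc'', hsp''⟩ := hj''
      have hnot1 : ¬(j'' < u1 ∧ u1 < j'' + 4) := by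
        rintro ⟨q1, q2⟩
        have := occ_mem hocc'' (k := u1 - 1) (by omega) (by omega)
        rw [hyL] at this; exact absurd this (by simp)
      simp only [Finset.mem_insert, Finset.mem_singleton]
      rcases hperm with ⟨e1', e2', e3', e4'⟩ | ⟨e1', e2', e3', e4'⟩ <;> omega
    omega
  -- main goal
  suffices hS : SpanSet x false a b = ∅ by
    refine ⟨?_, hS⟩
    rw [← Finset.card_eq_zero] at hS ⊢
    omega
  by_contra hne'
  obtain ⟨j, hj⟩ := Finset.nonempty_iff_ne_empty.mpr hne'
  have hjmem := hj
  simp only [SpanSet, Finset.mem_filter, Finset.mem_range] at hjmem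
  obtain ⟨hjr, hjocc, hjsp⟩ := hjmem
  have hjnospan := H1 j hjocc
  have hspan0 : j < u0 ∧ u0 < j + 4 := by
    rcases hperm with ⟨e1', e2', e3', e4'⟩ | ⟨e1', e2', e3', e4'⟩ <;> omega
  have hj4 : j + 4 ≤ x.length - 2 := by have := hjocc.1; omega
  have hyu0 : (deleteIdxs x ({a,b} : Finset ℕ)).getD u0 false = false := occ_mem hjocc (by omega) (by omega)
  -- rule out the (0,6) case
  have hSy1b' : (SpanSet x true a b).card ≤ 3 := by
    refine le_trans (Finset.card_le_card (t := ({u1-3,u1-2,u1-1} : Finset ℕ)) ?_) (card_le3 _ _ _)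
    intro j'' hj''
    simp only [SpanSet, Finset.mem_filter, Finset.mem_range] at hj''
    obtain ⟨hr'', hocc'', hsp''⟩ := hj''
    have hnot0 : ¬(j'' < u0 ∧ u0 < j'' + 4) := by
      rintro ⟨q1, q2⟩
      have := occ_mem hocc'' (k := u0) (by omega) (by omega)
      rw [hyu0] at this; exact absurd this (by simp)
    simp only [Finset.mem_insert, Finset.mem_singleton]
    rcases hperm with ⟨e1', e2', e3', e4'⟩ | ⟨e1', e2', e3', e4'⟩ <;> omega
  have e1' : (TouchSet x true a b).card = (SpanSet x true a b).card + 1 := by omega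
  have hTx1pos : 0 < (TouchSet x true a b).card := by omega
  obtain ⟨i1, hi1⟩ := Finset.card_pos.mp hTx1pos
  simp only [TouchSet, Finset.mem_filter, Finset.mem_range] at hi1
  obtain ⟨hi1r, hi1occ, hi1t⟩ := hi1
  have hi1k : i1 ≤ k₁ ∧ k₁ < i1 + 4 := by
    have hnk0 : ¬(i1 ≤ k₀ ∧ k₀ < i1 + 4) := by
      rintro ⟨p1, p2⟩
      have := occ_mem hi1occ p1 p2
      rw [hv0] at this; exact absurd this (by simp)
    rcases hperm with ⟨e1'', e2'', e3'', e4''⟩ | ⟨e1'', e2'', e3'', e4''⟩ <;> omega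
  -- claim C
  have claimC : ∀ j' ∈ SpanSet x false a b,
      (∀ m, dmap a b j' ≤ m → m ≤ dmap a b j' + 4 → x.getD m false = false) ∧
        dmap a b j' + 5 ≤ x.length ∧ dmap a b j' < k₀ ∧ k₀ < dmap a b j' + 4 := by
    intro j' hj'
    simp only [SpanSet, Finset.mem_filter, Finset.mem_range] at hj'
    obtain ⟨hr', hocc', hsp'⟩ := hj'
    have hns' := H1 j' hocc'
    have hj'4 : j' + 4 ≤ x.length - 2 := by have := hocc'.1; omega
    have hspan0' : j' < u0 ∧ u0 < j' + 4 := by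
      rcases hperm with ⟨e1', e2', e3', e4'⟩ | ⟨e1', e2', e3', e4'⟩ <;> omega
    have hu01 : u0 ≠ u1 := by
      intro h; rw [h] at hspan0'; exact hns' hspan0'
    rcases hperm with ⟨e1', e2', e3', e4'⟩ | ⟨e1', e2', e3', e4'⟩
    · -- k₀ = a, u0 = a, u1 = b-1
      have hnb : j' + 4 ≤ b - 1 := by omega
      have hdj : dmap a b j' = j' := by unfold dmap; split_ifs <;> omega
      rw [hdj]
      refine ⟨?_, by omega, by omega, by omega⟩
      intro m hm1 hm2
      rcases lt_trichotomy m a with hma | hma | hma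
      · have hval : (deleteIdxs x ({a,b} : Finset ℕ)).getD m false = false := occ_mem hocc' (by omega) (by omega)
        rw [getD_del2' x a b hab hb m m (by omega) (by omega)] at hval
        exact hval
      · rw [hma, ← e1']; exact hv0
      · have hval : (deleteIdxs x ({a,b} : Finset ℕ)).getD (m-1) false = false := occ_mem hocc' (by omega) (by omega)
        rw [getD_del2' x a b hab hb (m-1) m (by omega) (by omega)] at hval
        exact hval
    · -- k₀ = b, u0 = b-1, u1 = a
      have hna : a ≤ j' := by omega
      have hdj : dmap a b j' = j' + 1 := by unfold dmap; split_ifs <;> omega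
      rw [hdj]
      refine ⟨?_, by omega, by omega, by omega⟩
      intro m hm1 hm2
      rcases lt_trichotomy m b with hmb | hmb | hmb
      · have hval : (deleteIdxs x ({a,b} : Finset ℕ)).getD (m-1) false = false := occ_mem hocc' (by omega) (by omega)
        rw [getD_del2' x a b hab hb (m-1) m (by omega) (by omega)] at hval
        exact hval
      · rw [hmb, ← e1']; exact hv0
      · have hval : (deleteIdxs x ({a,b} : Finset ℕ)).getD (m-2) false = false := occ_mem hocc' (by omega) (by omega)
        rw [getD_del2' x a b hab hb (m-2) m (by omega) (by omega)] at hval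
        exact hval
  -- the injection
  have hnonempty : (SpanSet x false a b).Nonempty := ⟨j, hj⟩
  set jm := (SpanSet x false a b).max' hnonempty with hjmdef
  have hjm := Finset.max'_mem _ hnonempty
  obtain ⟨hCall, hC5, hCl, hCr⟩ := claimC jm hjm
  have hdmono : ∀ j1 j2 : ℕ, j1 ≤ j2 → dmap a b j1 ≤ dmap a b j2 := by
    intro j1 j2 h; unfold dmap; split_ifs <;> omega
  have hdstrict : ∀ j1 j2 : ℕ, j1 < j2 → dmap a b j1 < dmap a b j2 := by
    intro j1 j2 h; unfold dmap; split_ifs <;> omega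
  have hsub : insert (dmap a b jm + 1) ((SpanSet x false a b).image (dmap a b))
      ⊆ TouchSet x false a b := by
    intro i hi
    rcases Finset.mem_insert.mp hi with rfl | hi'
    · simp only [TouchSet, Finset.mem_filter, Finset.mem_range]
      refine ⟨by omega, ⟨by omega, hCall _ (by omega) (by omega), hCall _ (by omega) (by omega),
        hCall _ (by omega) (by omega), hCall _ (by omega) (by omega)⟩, ?_⟩
      rcases hperm with ⟨e1', e2', e3', e4'⟩ | ⟨e1', e2', e3', e4'⟩
      · left; omega
      · right; omega
    · obtain ⟨j', hj', rfl⟩ := Finset.mem_image.mp hi'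
      obtain ⟨hCall', hC5', hCl', hCr'⟩ := claimC j' hj'
      simp only [TouchSet, Finset.mem_filter, Finset.mem_range]
      refine ⟨by omega, ⟨by omega, hCall' _ (by omega) (by omega), hCall' _ (by omega) (by omega),
        hCall' _ (by omega) (by omega), hCall' _ (by omega) (by omega)⟩, ?_⟩
      rcases hperm with ⟨e1', e2', e3', e4'⟩ | ⟨e1', e2', e3', e4'⟩
      · left; omega
      · right; omega
  have himg : ((SpanSet x false a b).image (dmap a b)).card = (SpanSet x false a b).card := by
    apply Finset.card_image_of_injOn
    intro p hp q hq hpq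
    rcases lt_trichotomy p q with h | h | h
    · exact absurd hpq (by have := hdstrict p q h; omega)
    · exact h
    · exact absurd hpq (by have := hdstrict q p h; omega)
  have hnotmem : dmap a b jm + 1 ∉ (SpanSet x false a b).image (dmap a b) := by
    intro hmem
    obtain ⟨j', hj', heq⟩ := Finset.mem_image.mp hmem
    have hle : j' ≤ jm := Finset.le_max' _ _ hj'
    have := hdmono j' jm hle
    omega
  have hcard2 : (SpanSet x false a b).card + 1 ≤ (TouchSet x false a b).card := by
    have h1 := Finset.card_insert_of_notMem hnotmem
    have h2 := Finset.card_le_card hsub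
    omega
  omega

lemma junction_pair_left (a b : ℕ) (hab : a < b) :
    junction ({a,b} : Finset ℕ) a = a := by
  unfold junction
  rw [Finset.filter_true_of_mem, Finset.card_range]
  intro m hm
  simp only [Finset.mem_range] at hm
  simp only [Finset.mem_insert, Finset.mem_singleton]
  omega

lemma junction_pair_right (a b : ℕ) (hab : a < b) :
    junction ({a,b} : Finset ℕ) b = b - 1 := by
  unfold junction
  have h : (Finset.range b).filter (fun m => m ∉ ({a,b} : Finset ℕ))
      = (Finset.range b).erase a := by
    ext m
    simp only [Finset.mem_filter, Finset.mem_range, Finset.mem_erase,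
      Finset.mem_insert, Finset.mem_singleton]
    constructor
    · rintro ⟨h1, h2⟩; exact ⟨by omega, h1⟩
    · rintro ⟨h1, h2⟩; exact ⟨h2, by omega⟩
  rw [h, Finset.card_erase_of_mem (by simp only [Finset.mem_range]; omega), Finset.card_range]

lemma final (x : List Bool) (a b : ℕ) (hab : a < b) (hb : b < x.length)
    (k₀ k₁ : ℕ) (hk : (k₀ = a ∧ k₁ = b) ∨ (k₀ = b ∧ k₁ = a))
    (hv0 : x.getD k₀ false = false) (hv1 : x.getD k₁ false = true)
    (hm1 : Nw w1111 x ≡ Nw w1111 (deleteIdxs x ({a,b} : Finset ℕ)) + 1 [MOD 7])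
    (hm0 : Nw w0000 x ≡ Nw w0000 (deleteIdxs x ({a,b} : Finset ℕ)) [MOD 7]) :
    Preserved w0000 x (deleteIdxs x ({a,b} : Finset ℕ)) := by
  obtain ⟨hTx0, hSy0⟩ := main x a b hab hb k₀ k₁ hk hv0 hv1 hm1 hm0
  have hyl := length_del2 x a b hab hb
  refine ⟨{a, b}, ?_, ?_, rfl, ?_, ?_⟩
  · intro k hkm
    simp only [Finset.mem_insert, Finset.mem_singleton] at hkm
    omega
  · have hcard : ({a, b} : Finset ℕ).card = 2 := by
      rw [Finset.card_insert_of_notMem (by simp only [Finset.mem_singleton]; omega),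
        Finset.card_singleton]
    rw [hcard, hyl]; omega
  · -- no occurrence of 0000 in x is destroyed
    intro i hocc k hkm hcon
    have hocc' : Occ x false i := (occursAt_iff false x i).mp hocc
    have hc2' : i ≤ k ∧ k < i + 4 := by
      have : w0000.length = 4 := rfl
      omega
    simp only [Finset.mem_insert, Finset.mem_singleton] at hkm
    have hkor : k = k₀ ∨ k = k₁ := by rcases hk with ⟨e1, e2⟩ | ⟨e1, e2⟩ <;> omega
    rcases hkor with rfl | rfl
    · have hmem : i ∈ TouchSet x false a b := by
        simp only [TouchSet, Finset.mem_filter, Finset.mem_range]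
        refine ⟨by have := hocc'.1; omega, hocc', ?_⟩
        rcases hk with ⟨e1, e2⟩ | ⟨e1, e2⟩
        · left; omega
        · right; omega
      rw [hTx0] at hmem
      exact absurd hmem (Finset.notMem_empty i)
    · have := occ_mem hocc' hc2'.1 hc2'.2
      rw [hv1] at this
      exact absurd this (by simp)
  · -- no occurrence of 0000 in y spans a junction
    intro j hocc k hkm hcon
    have hocc' : Occ (deleteIdxs x ({a,b} : Finset ℕ)) false j :=
      (occursAt_iff false _ j).mp hocc
    obtain ⟨hc1, hc2⟩ := hcon
    have hc2' : junction ({a,b} : Finset ℕ) k < j + 4 := by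
      have : w0000.length = 4 := rfl
      omega
    simp only [Finset.mem_insert, Finset.mem_singleton] at hkm
    have hmem : j ∈ SpanSet x false a b := by
      simp only [SpanSet, Finset.mem_filter, Finset.mem_range]
      refine ⟨?_, hocc', ?_⟩
      · have := hocc'.1; rw [hyl] at this; omega
      · rcases hkm with he | he
        · left
          rw [he, junction_pair_left a b hab] at hc1
          rw [he, junction_pair_left a b hab] at hc2'
          exact ⟨hc1, hc2'⟩
        · right
          rw [he, junction_pair_right a b hab] at hc1
          rw [he, junction_pair_right a b hab] at hc2'
          exact ⟨hc1, hc2'⟩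
    rw [hSy0] at hmem
    exact absurd hmem (Finset.notMem_empty j)

end ZO

/-- If a `0` and a `1` are deleted with `N₁₁₁₁(x) - N₁₁₁₁(y) ≡ 1 (mod 7)` and
`N₀₀₀₀(x) ≡ N₀₀₀₀(y) (mod 7)`, then `0000` is preserved. -/
theorem zero_one_0000_preserved (x y : List Bool) (k₀ k₁ : ℕ) (hne : k₀ ≠ k₁)
    (h0 : k₀ < x.length) (h1 : k₁ < x.length)
    (hv0 : x.getD k₀ false = false) (hv1 : x.getD k₁ false = true)
    (hy : y = deleteIdxs x ({k₀, k₁} : Finset ℕ))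
    (hm1 : Nw w1111 x ≡ Nw w1111 y + 1 [MOD 7])
    (hm0 : Nw w0000 x ≡ Nw w0000 y [MOD 7]) :
    Preserved w0000 x y := by
  subst hy
  rcases Nat.lt_or_ge k₀ k₁ with h | h
  · exact ZO.final x k₀ k₁ h h1 k₀ k₁ (Or.inl ⟨rfl, rfl⟩) hv0 hv1 hm1 hm0
  · have h' : k₁ < k₀ := by omega
    have hpair : ({k₀, k₁} : Finset ℕ) = {k₁, k₀} := Finset.pair_comm k₀ k₁
    rw [hpair] at hm1 hm0 ⊢
    exact ZO.final x k₁ k₀ h' h0 k₀ k₁ (Or.inr ⟨rfl, rfl⟩) hv0 hv1 hm1 hm0
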